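/- In the 4-machine instance of Theorem 1.2 (jobs J_{ij} for each pair of machines, J₁₂ and J₃₄ of size 3, the rest of size 1), the fractional Configuration-LP solution assigning to each machine Mᵢ with fraction 1/2 the singleton configuration {large job on Mᵢ} and with fraction 1/2 the configuration of its two small jobs is feasible (each job fractionally processed exactly once) and has cost 4·(9/2 + 3/2) = 24. Hence the integrality gap of the Configuration-LP is at least 26/24 = 13/12. -/

import Mathlib

/-- Jobs of the 4-machine instance: one job `J_{ij}` per pair `{i,j}` of machines. -/
def GapJob := {p : Fin 4 × Fin 4 // p.1 < p.2}

instance : Fintype GapJob := Subtype.fintype _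
instance : DecidableEq GapJob := Subtype.instDecidableEq

/-- Job sizes: `J₁₂` and `J₃₄` have size 3, the other four jobs have size 1. -/
def gapSize (j : GapJob) : ℝ :=
  if j.val = ((0 : Fin 4), (1 : Fin 4)) ∨ j.val = ((2 : Fin 4), (3 : Fin 4)) then 3 else 1

/-- Cost of a configuration `C` of jobs: `((Σ sizes)² + Σ sizes²)/2`. -/
noncomputable def cfgCost (C : Finset GapJob) : ℝ :=
  ((∑ j ∈ C, gapSize j) ^ 2 + ∑ j ∈ C, gapSize j ^ 2) / 2

/-- The large job processable on machine `i`. -/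
def bigJob (i : Fin 4) : GapJob :=
  if i = 0 ∨ i = 1 then ⟨((0 : Fin 4), (1 : Fin 4)), by decide⟩
  else ⟨((2 : Fin 4), (3 : Fin 4)), by decide⟩

/-- The configuration of the two small jobs processable on machine `i`. -/
def smallCfg (i : Fin 4) : Finset GapJob :=
  Finset.univ.filter (fun j =>
    (j.val.1 = i ∨ j.val.2 = i) ∧
      ¬(j.val = ((0 : Fin 4), (1 : Fin 4)) ∨ j.val = ((2 : Fin 4), (3 : Fin 4))))

/-- The fractional Configuration-LP solution: each machine gets its singleton large-job
configuration with value 1/2 and its two-small-jobs configuration with value 1/2. -/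
noncomputable def ylp (i : Fin 4) (C : Finset GapJob) : ℝ :=
  if C = {bigJob i} then 1 / 2 else if C = smallCfg i then 1 / 2 else 0

lemma big_ne_small (i : Fin 4) : ({bigJob i} : Finset GapJob) ≠ smallCfg i := by
  fin_cases i <;> decide

lemma ylp_eq (i : Fin 4) (C : Finset GapJob) :
    ylp i C = (if C = {bigJob i} then 1/2 else 0) + (if C = smallCfg i then 1/2 else 0) := by
  have h := big_ne_small i
  unfold ylp; split_ifs with h1 h2 <;> simp_all

lemma sum_filter_ylp (i : Fin 4) (p : Finset GapJob → Prop) [DecidablePred p] :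
    ∑ C ∈ Finset.univ.filter p, ylp i C
      = (if p {bigJob i} then (1:ℝ)/2 else 0) + (if p (smallCfg i) then 1/2 else 0) := by
  simp [ylp_eq, Finset.sum_add_distrib, Finset.sum_ite_eq', Finset.mem_filter]

theorem stmt_12 :
    (∀ i : Fin 4, ∑ C : Finset GapJob, ylp i C ≤ 1) ∧
    (∀ j : GapJob,
      ∑ i : Fin 4, ∑ C ∈ Finset.univ.filter (fun C : Finset GapJob => j ∈ C), ylp i C = 1) ∧
    (∀ i : Fin 4, ∀ C : Finset GapJob, ylp i C ≠ 0 →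
      ∀ j ∈ C, j.val.1 = i ∨ j.val.2 = i) ∧
    (∑ i : Fin 4, ∑ C : Finset GapJob, ylp i C * cfgCost C = 24) ∧
    (26 : ℝ) / 24 = 13 / 12 := by
  refine ⟨?_, ?_, ?_, ?_, by norm_num⟩
  · intro i
    simp [ylp_eq, Finset.sum_add_distrib, Finset.sum_ite_eq']
    norm_num
  · intro j
    have hc : ∀ j : GapJob, (Finset.univ.filter (fun i : Fin 4 => j ∈ ({bigJob i} : Finset GapJob))).card
        + (Finset.univ.filter (fun i : Fin 4 => j ∈ smallCfg i)).card = 2 := by decide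
    simp only [sum_filter_ylp, Finset.sum_add_distrib, ← Finset.sum_filter, Finset.sum_const, nsmul_eq_mul]
    rw [← add_mul, ← Nat.cast_add, hc j]; norm_num
  · intro i C h j hj
    unfold ylp at h
    split_ifs at h with h1 h2
    · subst h1
      simp only [Finset.mem_singleton] at hj
      subst hj
      fin_cases i <;> decide
    · subst h2
      exact (Finset.mem_filter.mp hj).2.1
    · exact absurd rfl h
  · have key : ∀ i : Fin 4, ∑ C : Finset GapJob, ylp i C * cfgCost C
        = cfgCost {bigJob i} / 2 + cfgCost (smallCfg i) / 2 := by
      intro i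
      simp [ylp_eq, add_mul, ite_mul, Finset.sum_add_distrib, Finset.sum_ite_eq']
      ring
    have hbig : ∀ i, cfgCost {bigJob i} = 9 := by
      intro i
      have : gapSize (bigJob i) = 3 := by fin_cases i <;> simp +decide [bigJob, gapSize]
      simp [cfgCost, this]; norm_num
    have hsmall : ∀ i, cfgCost (smallCfg i) = 3 := by
      intro i
      have h2 : ∀ j ∈ smallCfg i, gapSize j = 1 := by
        intro j hj
        have := (Finset.mem_filter.mp hj).2.2
        unfold gapSize; rw [if_neg this]
      have hc : (smallCfg i).card = 2 := by fin_cases i <;> decide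
      have hs1 : ∑ j ∈ smallCfg i, gapSize j = 2 := by
        rw [Finset.sum_congr rfl h2]; simp [hc]
      have hs2 : ∑ j ∈ smallCfg i, gapSize j ^ 2 = 2 := by
        rw [Finset.sum_congr rfl (fun j hj => by rw [h2 j hj, one_pow])]; simp [hc]
      simp [cfgCost, hs1, hs2]; norm_num
    simp [Fin.sum_univ_four, key, hbig, hsmall]; norm_num
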